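/- For t ≥ 2, let μ_k = k^t. Then the coefficient of x^m in ∏_{k≥1}(1-x^{μ_k})^{-Φ(k)} equals 1 for 1 ≤ m ≤ 2^t − 1, equals 2 for 2^t ≤ m ≤ 2^{t+1} − 1, and is at least 3 for m ≥ 2^{t+1}. -/

import Mathlib

open PowerSeries Finset

noncomputable def Ind (n : ℕ) : PowerSeries ℚ :=
  PowerSeries.mk fun j => if n ∣ j then 1 else 0

lemma one_sub_X_pow_mul_Ind {n : ℕ} (hn : 0 < n) : (1 - X ^ n) * Ind n = 1 := by
  ext j
  rw [sub_mul, one_mul, map_sub]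
  rcases lt_or_ge j n with h | h
  · rw [coeff_X_pow_mul' (Ind n) n j, if_neg (by omega)]
    rcases Nat.eq_zero_or_pos j with rfl | hj
    · simp [Ind, Nat.dvd_zero]
    · simp [Ind, Nat.not_dvd_of_pos_of_lt hj h, coeff_one, hj.ne']
  · rw [coeff_X_pow_mul' (Ind n) n j, if_pos h]
    have hj : j ≠ 0 := by omega
    have : n ∣ j ↔ n ∣ j - n := by
      constructor
      · intro hd; exact (Nat.dvd_sub hd dvd_rfl)
      · intro hd; have := Nat.dvd_add hd (dvd_refl n); rwa [Nat.sub_add_cancel h] at this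
    simp only [Ind, coeff_mk, coeff_one, if_neg hj]; simp only [← this, sub_self]

lemma inv_eq_Ind_pow {n p : ℕ} (hn : 0 < n) :
    ((1 - (X : PowerSeries ℚ) ^ n) ^ p)⁻¹ = (Ind n) ^ p := by
  rw [PowerSeries.inv_eq_iff_mul_eq_one]
  · rw [← mul_pow, mul_comm, one_sub_X_pow_mul_Ind hn, one_pow]
  · simp [constantCoeff_X, hn.ne']

def NonnegPS (f : PowerSeries ℚ) : Prop := ∀ j, 0 ≤ PowerSeries.coeff (R := ℚ) j f

lemma NonnegPS.mul {f g : PowerSeries ℚ} (hf : NonnegPS f) (hg : NonnegPS g) :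
    NonnegPS (f * g) := by
  intro j
  rw [PowerSeries.coeff_mul]
  exact Finset.sum_nonneg fun p _ => mul_nonneg (hf p.1) (hg p.2)

lemma NonnegPS.one : NonnegPS 1 := by
  intro j; rw [PowerSeries.coeff_one]; positivity

lemma NonnegPS.pow {f : PowerSeries ℚ} (hf : NonnegPS f) (p : ℕ) : NonnegPS (f ^ p) := by
  induction p with
  | zero => simpa using NonnegPS.one
  | succ p ih => rw [pow_succ]; exact ih.mul hf

lemma NonnegPS.prod {s : Finset ℕ} {f : ℕ → PowerSeries ℚ}
    (hf : ∀ k ∈ s, NonnegPS (f k)) : NonnegPS (∏ k ∈ s, f k) :=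
  Finset.prod_induction f NonnegPS (fun _ _ => NonnegPS.mul) NonnegPS.one hf

lemma Ind_nonneg (n : ℕ) : NonnegPS (Ind n) := by
  intro j; simp only [Ind, coeff_mk]; positivity

lemma constantCoeff_Ind (n : ℕ) : PowerSeries.constantCoeff (R := ℚ) (Ind n) = 1 := by
  simp [Ind, ← coeff_zero_eq_constantCoeff_apply]

/-- If `X^N ∣ f k - 1` for all `k ∈ s`, then `X^N ∣ ∏ f - 1`. -/
lemma X_pow_dvd_prod_sub_one {N : ℕ} {s : Finset ℕ} {f : ℕ → PowerSeries ℚ}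
    (hf : ∀ k ∈ s, (X : PowerSeries ℚ) ^ N ∣ f k - 1) :
    (X : PowerSeries ℚ) ^ N ∣ (∏ k ∈ s, f k) - 1 := by
  classical
  induction s using Finset.induction with
  | empty => simp
  | @insert a s' hx ih =>
    rw [Finset.prod_insert hx]
    have h1 : f a * ∏ k ∈ s', f k - 1
        = f a * ((∏ k ∈ s', f k) - 1) + (f a - 1) := by ring
    rw [h1]
    exact dvd_add (Dvd.dvd.mul_left (ih fun k hk => hf k (Finset.mem_insert_of_mem hk)) _)
      (hf a (Finset.mem_insert_self a s'))

lemma X_pow_dvd_Ind_sub_one {n : ℕ} (hn : 0 < n) :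
    (X : PowerSeries ℚ) ^ n ∣ Ind n - 1 := by
  rw [PowerSeries.X_pow_dvd_iff]
  intro j hj
  rcases Nat.eq_zero_or_pos j with rfl | h
  · simp [Ind, coeff_zero_eq_constantCoeff_apply, constantCoeff_Ind]
  · simp [Ind, coeff_one, h.ne', Nat.not_dvd_of_pos_of_lt h hj]

lemma X_pow_dvd_IndPow_sub_one {n p : ℕ} (hn : 0 < n) :
    (X : PowerSeries ℚ) ^ n ∣ (Ind n) ^ p - 1 := by
  have := X_pow_dvd_prod_sub_one (N := n) (s := Finset.range p)
    (f := fun _ => Ind n) (fun k _ => X_pow_dvd_Ind_sub_one hn)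
  simpa using this

/-- Multiplying by factors congruent to 1 mod `X^(m+1)` doesn't change `coeff m`. -/
lemma coeff_mul_congr {m : ℕ} {A B : PowerSeries ℚ}
    (h : (X : PowerSeries ℚ) ^ (m + 1) ∣ B - 1) :
    PowerSeries.coeff (R := ℚ) m (A * B) = PowerSeries.coeff (R := ℚ) m A := by
  have h2 : (X : PowerSeries ℚ) ^ (m + 1) ∣ A * B - A := by
    have : A * B - A = A * (B - 1) := by ring
    rw [this]; exact (h.mul_left A)
  have := (PowerSeries.X_pow_dvd_iff.mp h2) m (Nat.lt_succ_self m)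
  rw [map_sub] at this
  linarith

lemma coeff_Ind_one_mul_Ind (n m : ℕ) (hn : 0 < n) :
    PowerSeries.coeff (R := ℚ) m (Ind 1 * Ind n) = (m / n + 1 : ℕ) := by
  rw [PowerSeries.coeff_mul]
  have h1 : ∀ p ∈ Finset.HasAntidiagonal.antidiagonal m,
      PowerSeries.coeff (R := ℚ) p.1 (Ind 1) * PowerSeries.coeff (R := ℚ) p.2 (Ind n)
      = if n ∣ p.2 then 1 else 0 := by
    intro p _; simp [Ind]
  rw [Finset.sum_congr rfl h1]
  rw [Finset.Nat.sum_antidiagonal_eq_sum_range_succ (fun a b => if n ∣ b then (1:ℚ) else 0)]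
  rw [Finset.sum_ite, Finset.sum_const_zero, add_zero, Finset.sum_const, nsmul_eq_mul, mul_one]
  norm_cast
  -- card of {k ∈ range (m+1) | n ∣ m - k} = m / n + 1
  have hbij : {k ∈ Finset.range (m+1) | n ∣ m - k}.card
      = {b ∈ Finset.range (m+1) | n ∣ b}.card := by
    apply Finset.card_nbij (fun k => m - k)
    · intro k hk
      simp only [Finset.coe_filter, Set.mem_setOf_eq, Finset.mem_filter, Finset.mem_range] at hk ⊢
      exact ⟨by omega, hk.2⟩
    · intro a ha b hb hab
      simp only [Finset.coe_filter, Set.mem_setOf_eq, Finset.mem_range] at ha hb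
      simp only at hab
      omega
    · intro b hb
      simp only [Finset.coe_filter, Set.mem_setOf_eq, Finset.mem_range] at hb
      refine ⟨m - b, ?_, ?_⟩
      · simp only [Finset.coe_filter, Set.mem_setOf_eq, Finset.mem_range]
        have : m - (m - b) = b := by omega
        rw [this]
        exact ⟨by omega, hb.2⟩
      · simp only; omega
  rw [hbij]
  have : Finset.range (m+1) = insert 0 (Finset.Ioc 0 m) := by
    ext x; simp [Finset.mem_range, Finset.mem_Ioc]
  rw [this, Finset.filter_insert, if_pos (Nat.dvd_zero n),
    Finset.card_insert_of_notMem (by simp), Nat.Ioc_filter_dvd_card_eq_div]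


lemma two_pow_succ_le_three_pow {t : ℕ} (ht : 2 ≤ t) : 2 ^ (t + 1) ≤ 3 ^ t := by
  induction t with
  | zero => omega
  | succ n ih =>
    rcases Nat.lt_or_ge n 2 with h | h
    · interval_cases n <;> first | omega | norm_num
    · have := ih h
      calc 2 ^ (n + 2) = 2 * 2 ^ (n + 1) := by ring
        _ ≤ 2 * 3 ^ n := by omega
        _ ≤ 3 ^ (n + 1) := by ring_nf; omega



/-- The coefficient of `x^m` in `∏_{k ≥ 1} (1 - x^{k^t})^{-Φ(k)}` (factors with `k > m`
have `k^t ≥ k > m` and do not affect this coefficient). -/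
noncomputable def gfCoeff (t m : ℕ) : ℚ :=
  PowerSeries.coeff (R := ℚ) m
    (∏ k ∈ Finset.Icc 1 m,
      ((1 - (PowerSeries.X : PowerSeries ℚ) ^ (k ^ t)) ^ Nat.totient k)⁻¹)

/-- For `t ≥ 2` and `μ_k = k^t`, the coefficient of `x^m` in
`∏_{k ≥ 1}(1-x^{μ_k})^{-Φ(k)}` equals `1` for `1 ≤ m ≤ 2^t − 1`, equals `2` for
`2^t ≤ m ≤ 2^{t+1} − 1`, and is at least `3` for `m ≥ 2^{t+1}`. -/
theorem gf_coeff_values (t : ℕ) (ht : 2 ≤ t) :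
    (∀ m : ℕ, 1 ≤ m → m ≤ 2 ^ t - 1 → gfCoeff t m = 1) ∧
    (∀ m : ℕ, 2 ^ t ≤ m → m ≤ 2 ^ (t + 1) - 1 → gfCoeff t m = 2) ∧
    (∀ m : ℕ, 2 ^ (t + 1) ≤ m → 3 ≤ gfCoeff t m) := by
  have hG : ∀ k : ℕ, 1 ≤ k →
      ((1 - (PowerSeries.X : PowerSeries ℚ) ^ (k ^ t)) ^ Nat.totient k)⁻¹
        = (Ind (k ^ t)) ^ Nat.totient k := fun k hk =>
    inv_eq_Ind_pow (Nat.pow_pos (n := t) hk)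
  have h4 : 4 ≤ 2 ^ t := by calc 4 = 2^2 := rfl
                                 _ ≤ 2^t := Nat.pow_le_pow_right (by norm_num) ht
  set G : ℕ → PowerSeries ℚ :=
    fun k => ((1 - (PowerSeries.X : PowerSeries ℚ) ^ (k ^ t)) ^ Nat.totient k)⁻¹ with hGdef
  have hGk : ∀ k : ℕ, 1 ≤ k → G k = (Ind (k ^ t)) ^ Nat.totient k := hG
  have hG1 : G 1 = Ind 1 := by
    rw [hGk 1 le_rfl]; simp [Nat.totient_one]
  have hG2 : G 2 = Ind (2 ^ t) := by
    rw [hGk 2 (by norm_num)]; simp [Nat.totient_two]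
  -- congruence: for k with k^t ≥ N, X^N ∣ G k - 1
  have hdvd : ∀ (N k : ℕ), 1 ≤ k → N ≤ k ^ t →
      (PowerSeries.X : PowerSeries ℚ) ^ N ∣ G k - 1 := by
    intro N k hk hN
    rw [hGk k hk]
    exact (pow_dvd_pow _ hN).trans (X_pow_dvd_IndPow_sub_one (Nat.pow_pos (n := t) hk))
  refine ⟨?_, ?_, ?_⟩
  · -- Case 1
    intro m hm1 hm2
    have hIcc : Finset.Icc 1 m = Finset.Ioc 0 m := rfl
    have hsplit : (∏ k ∈ Finset.Ioc 0 1, G k) * ∏ k ∈ Finset.Ioc 1 m, G k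
        = ∏ k ∈ Finset.Ioc 0 m, G k :=
      Finset.prod_Ioc_consecutive G (Nat.zero_le 1) hm1
    have h01 : Finset.Ioc 0 1 = {1} := rfl
    rw [gfCoeff, hIcc, ← hsplit, h01, Finset.prod_singleton]
    rw [coeff_mul_congr (X_pow_dvd_prod_sub_one ?_), hG1]
    · simp [Ind]
    · intro k hk
      rw [Finset.mem_Ioc] at hk
      refine hdvd _ k (by omega) ?_
      calc m + 1 ≤ 2 ^ t := by omega
        _ ≤ k ^ t := Nat.pow_le_pow_left hk.1 t
  · -- Case 2
    intro m hm1 hm2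
    have hm2' : 2 ≤ m := by omega
    have hsplit : (∏ k ∈ Finset.Ioc 0 2, G k) * ∏ k ∈ Finset.Ioc 2 m, G k
        = ∏ k ∈ Finset.Ioc 0 m, G k :=
      Finset.prod_Ioc_consecutive G (Nat.zero_le 2) hm2'
    have h02 : (∏ k ∈ Finset.Ioc 0 2, G k) = G 1 * G 2 := by
      have : Finset.Ioc 0 2 = {1, 2} := rfl
      rw [this, Finset.prod_insert (by norm_num), Finset.prod_singleton]
    rw [gfCoeff, show Finset.Icc 1 m = Finset.Ioc 0 m from rfl, ← hsplit, h02]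
    rw [coeff_mul_congr (X_pow_dvd_prod_sub_one ?_)]
    · rw [hG1, hG2, coeff_Ind_one_mul_Ind _ _ (by omega)]
      have hdiv : m / 2 ^ t = 1 :=
        Nat.div_eq_of_lt_le (by omega) (by rw [pow_succ] at hm2; omega)
      rw [hdiv]; norm_num
    · intro k hk
      rw [Finset.mem_Ioc] at hk
      refine hdvd _ k (by omega) ?_
      calc m + 1 ≤ 2 ^ (t+1) := by omega
        _ ≤ 3 ^ t := two_pow_succ_le_three_pow ht
        _ ≤ k ^ t := Nat.pow_le_pow_left hk.1 t
  · -- Case 3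
    intro m hm
    have hm2' : 2 ≤ m := by rw [pow_succ] at hm; omega
    have hsplit : (∏ k ∈ Finset.Ioc 0 2, G k) * ∏ k ∈ Finset.Ioc 2 m, G k
        = ∏ k ∈ Finset.Ioc 0 m, G k :=
      Finset.prod_Ioc_consecutive G (Nat.zero_le 2) hm2'
    have h02 : (∏ k ∈ Finset.Ioc 0 2, G k) = G 1 * G 2 := by
      have : Finset.Ioc 0 2 = {1, 2} := rfl
      rw [this, Finset.prod_insert (by norm_num), Finset.prod_singleton]
    rw [gfCoeff, show Finset.Icc 1 m = Finset.Ioc 0 m from rfl, ← hsplit, h02]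
    set R : PowerSeries ℚ := ∏ k ∈ Finset.Ioc 2 m, G k with hR
    have hRnn : NonnegPS R := by
      refine NonnegPS.prod fun k hk => ?_
      rw [Finset.mem_Ioc] at hk
      rw [hGk k (by omega)]
      exact (Ind_nonneg _).pow _
    have hAnn : NonnegPS (G 1 * G 2) := by
      rw [hG1, hG2]
      exact (Ind_nonneg _).mul (Ind_nonneg _)
    have hR0 : PowerSeries.coeff (R := ℚ) 0 R = 1 := by
      rw [hR, coeff_zero_eq_constantCoeff_apply, map_prod]
      refine Finset.prod_eq_one fun k hk => ?_
      rw [Finset.mem_Ioc] at hk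
      rw [hGk k (by omega), map_pow, constantCoeff_Ind, one_pow]
    have hkey : PowerSeries.coeff (R := ℚ) m (G 1 * G 2)
        ≤ PowerSeries.coeff (R := ℚ) m ((G 1 * G 2) * R) := by
      conv_rhs => rw [PowerSeries.coeff_mul]
      have hmem : ((m, 0) : ℕ × ℕ) ∈ Finset.HasAntidiagonal.antidiagonal m := by simp
      have := Finset.single_le_sum
        (f := fun p : ℕ × ℕ => PowerSeries.coeff (R := ℚ) p.1 (G 1 * G 2) * PowerSeries.coeff (R := ℚ) p.2 R)
        (fun p _ => mul_nonneg (hAnn p.1) (hRnn p.2)) hmem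
      simpa [hR0] using this
    refine le_trans ?_ hkey
    rw [hG1, hG2, coeff_Ind_one_mul_Ind _ _ (by omega)]
    have hdiv : 2 ≤ m / 2 ^ t := by
      rw [Nat.le_div_iff_mul_le (by omega)]
      rw [pow_succ] at hm; omega
    have : (3 : ℚ) ≤ ((m / 2 ^ t + 1 : ℕ) : ℚ) := by exact_mod_cast by omega
    exact this
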